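/- For any nonempty closed hemispherical subset W of Sⁿ⁺¹, the double spherical polar of the spherical convex hull equals the spherical convex hull itself: (s-conv W)°° = s-conv W. -/

import Mathlib

open RealInnerProductSpace

/-- The unit sphere `Sⁿ⁺¹` in `ℝⁿ⁺²`. -/
def sph (n : ℕ) : Set (EuclideanSpace ℝ (Fin (n + 2))) :=
  Metric.sphere (0 : EuclideanSpace ℝ (Fin (n + 2))) 1

/-- The closed hemisphere centered at `P`. -/
def hemi (n : ℕ) (P : EuclideanSpace ℝ (Fin (n + 2))) :
    Set (EuclideanSpace ℝ (Fin (n + 2))) :=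
  {Q ∈ sph n | 0 ≤ ⟪P, Q⟫}

/-- The spherical polar set `W° = ⋂_{P ∈ W} H(P)`. -/
def spolar (n : ℕ) (W : Set (EuclideanSpace ℝ (Fin (n + 2)))) :
    Set (EuclideanSpace ℝ (Fin (n + 2))) :=
  {Q ∈ sph n | ∀ P ∈ W, 0 ≤ ⟪P, Q⟫}

/-- `W` is hemispherical: disjoint from some closed hemisphere. -/
def Hemispherical (n : ℕ) (W : Set (EuclideanSpace ℝ (Fin (n + 2)))) : Prop :=
  ∃ Q ∈ sph n, W ∩ hemi n Q = ∅

/-- The spherical convex hull: normalized nonnegative convex combinations of points of `W`. -/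
def sconv (n : ℕ) (W : Set (EuclideanSpace ℝ (Fin (n + 2)))) :
    Set (EuclideanSpace ℝ (Fin (n + 2))) :=
  {x | ∃ (k : ℕ) (t : Fin k → ℝ) (P : Fin k → EuclideanSpace ℝ (Fin (n + 2))),
    (∀ i, P i ∈ W) ∧ (∀ i, 0 ≤ t i) ∧ (∑ i, t i) = 1 ∧
    x = ‖∑ i, t i • P i‖⁻¹ • ∑ i, t i • P i}

/-! ### Auxiliary material -/

open Finset in
private lemma pad_sum {M : Type*} [AddCommMonoid M] {m d : ℕ} (hmd : m ≤ d) (g : Fin m → M) :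
    ∑ j : Fin d, (if h : (j : ℕ) < m then g ⟨j, h⟩ else 0) = ∑ i, g i := by
  set F : ℕ → M := fun j => if h : j < m then g ⟨j, h⟩ else 0 with hF
  have h1 : ∑ j : Fin d, F j = ∑ j ∈ range d, F j := Fin.sum_univ_eq_sum_range F d
  have h2 : ∑ j ∈ range d, F j = ∑ j ∈ range m, F j := by
    refine (Finset.sum_subset (Finset.range_subset_range.mpr hmd) ?_).symm
    intro x _ hx
    rw [Finset.mem_range] at hx
    simp [hF, hx]
  have h3 : ∑ j : Fin m, F j = ∑ j ∈ range m, F j := Fin.sum_univ_eq_sum_range F m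
  calc ∑ j : Fin d, F j = ∑ j ∈ range m, F j := by rw [h1, h2]
    _ = ∑ j : Fin m, F j := h3.symm
    _ = ∑ i, g i := Finset.sum_congr rfl fun i _ => by simp [hF, i.isLt]

/-- In a finite-dimensional space, the convex hull of a compact set is compact
(via Carathéodory's theorem). -/
private lemma isCompact_convexHull' {E : Type*} [NormedAddCommGroup E] [NormedSpace ℝ E]
    [FiniteDimensional ℝ E] {s : Set E} (hs : IsCompact s) : IsCompact (convexHull ℝ s) := by
  rcases s.eq_empty_or_nonempty with rfl | ⟨p₀, hp₀⟩
  · simp [convexHull_empty]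
  set d := Module.finrank ℝ E + 1 with hd
  set φ : (Fin d → ℝ) × (Fin d → E) → E := fun p => ∑ j, p.1 j • p.2 j with hφ
  set T : Set ((Fin d → ℝ) × (Fin d → E)) :=
    (stdSimplex ℝ (Fin d)) ×ˢ (Set.univ.pi fun _ : Fin d => s) with hT
  have hTc : IsCompact T := (isCompact_stdSimplex _ _).prod (isCompact_univ_pi fun _ => hs)
  have hφc : Continuous φ :=
    continuous_finset_sum _ fun i _ =>
      ((continuous_apply i).comp continuous_fst).smul ((continuous_apply i).comp continuous_snd)
  have key : convexHull ℝ s = φ '' T := by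
    apply Set.Subset.antisymm
    · intro x hx
      obtain ⟨ι, _, z, w, hzs, hai, hw, hw1, hxe⟩ := eq_pos_convex_span_of_mem_convexHull hx
      set m := Fintype.card ι with hm
      have hmd : m ≤ d := by
        refine le_trans hai.card_le_finrank_succ ?_
        exact Nat.add_le_add_right (Submodule.finrank_le _) 1
      set e : ι ≃ Fin m := Fintype.equivFin ι with he
      set w' : Fin d → ℝ := fun j => if h : (j : ℕ) < m then w (e.symm ⟨j, h⟩) else 0 with hw'
      set z' : Fin d → E := fun j => if h : (j : ℕ) < m then z (e.symm ⟨j, h⟩) else p₀ with hz'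
      have hsum1 : ∑ j, w' j = 1 := by
        rw [hw', pad_sum hmd (fun i => w (e.symm i))]
        rw [Equiv.sum_comp e.symm w]
        exact hw1
      refine ⟨⟨w', z'⟩, ⟨⟨fun j => ?_, hsum1⟩, fun j _ => ?_⟩, ?_⟩
      · by_cases h : (j : ℕ) < m <;> simp [hw', h, (hw _).le]
      · by_cases h : (j : ℕ) < m <;> simp only [hz', h, dif_pos, dif_neg, not_false_iff]
        · exact hzs (Set.mem_range_self _)
        · exact hp₀
      · show ∑ j, w' j • z' j = x
        have hptwise : ∀ j : Fin d, w' j • z' j =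
            (if h : (j : ℕ) < m then w (e.symm ⟨j, h⟩) • z (e.symm ⟨j, h⟩) else 0) := by
          intro j
          by_cases h : (j : ℕ) < m <;> simp [hw', hz', h]
        rw [Finset.sum_congr rfl fun j _ => hptwise j,
          pad_sum hmd (fun i => w (e.symm i) • z (e.symm i)),
          Equiv.sum_comp e.symm (fun i => w i • z i)]
        exact hxe
    · rintro x ⟨⟨w, z⟩, ⟨hw, hz⟩, rfl⟩
      exact mem_convexHull_of_exists_fintype w z hw.1 hw.2 (fun i => hz i (Set.mem_univ i)) rfl
  rw [key]
  exact hTc.image hφc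

private lemma hull_inner_le {E : Type*} [NormedAddCommGroup E] [InnerProductSpace ℝ E]
    {W : Set E} {Q : E} {ε : ℝ} (hQW : ∀ P ∈ W, ⟪Q, P⟫ ≤ -ε) :
    ∀ y ∈ convexHull ℝ W, ⟪Q, y⟫ ≤ -ε := by
  have hlin : IsLinearMap ℝ (fun y : E => ⟪Q, y⟫) :=
    ⟨fun x y => inner_add_right Q x y, fun c x => real_inner_smul_right Q x c⟩
  exact fun y hy => convexHull_min hQW (convex_halfSpace_le hlin (-ε)) hy

private lemma hull_norm_ge {E : Type*} [NormedAddCommGroup E] [InnerProductSpace ℝ E]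
    {W : Set E} {Q : E} (hQ1 : ‖Q‖ = 1) {ε : ℝ} (hQW : ∀ P ∈ W, ⟪Q, P⟫ ≤ -ε) :
    ∀ y ∈ convexHull ℝ W, ε ≤ ‖y‖ := by
  intro y hy
  have h1 : ⟪Q, y⟫ ≤ -ε := hull_inner_le hQW y hy
  have h2 : |⟪Q, y⟫| ≤ ‖Q‖ * ‖y‖ := abs_real_inner_le_norm Q y
  rw [hQ1, one_mul] at h2
  have h4 : -⟪Q, y⟫ ≤ |⟪Q, y⟫| := neg_le_abs _
  linarith

/-- The cone over the convex hull of `W`. -/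
private def Kset (n : ℕ) (W : Set (EuclideanSpace ℝ (Fin (n + 2)))) :
    Set (EuclideanSpace ℝ (Fin (n + 2))) :=
  {x | ∃ l : ℝ, 0 ≤ l ∧ ∃ y ∈ convexHull ℝ W, x = l • y}

private noncomputable def Kcone (n : ℕ) (W : Set (EuclideanSpace ℝ (Fin (n + 2)))) :
    ConvexCone ℝ (EuclideanSpace ℝ (Fin (n + 2))) where
  carrier := Kset n W
  smul_mem' := by
    rintro c hc x ⟨l, hl, y, hy, rfl⟩
    exact ⟨c * l, mul_nonneg hc.le hl, y, hy, (smul_smul c l y)⟩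
  add_mem' := by
    rintro _ ⟨l₁, hl₁, y₁, hy₁, rfl⟩ _ ⟨l₂, hl₂, y₂, hy₂, rfl⟩
    rcases eq_or_lt_of_le (add_nonneg hl₁ hl₂) with h | h
    · have h1 : l₁ = 0 := by linarith
      have h2 : l₂ = 0 := by linarith
      exact ⟨0, le_refl 0, y₁, hy₁, by simp [h1, h2]⟩
    · refine ⟨l₁ + l₂, h.le, (l₁ / (l₁ + l₂)) • y₁ + (l₂ / (l₁ + l₂)) • y₂, ?_, ?_⟩
      · refine (convex_convexHull ℝ W) hy₁ hy₂ (div_nonneg hl₁ h.le) (div_nonneg hl₂ h.le) ?_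
        field_simp
      · rw [smul_add, smul_smul, smul_smul]
        have e1 : (l₁ + l₂) * (l₁ / (l₁ + l₂)) = l₁ := by field_simp
        have e2 : (l₁ + l₂) * (l₂ / (l₁ + l₂)) = l₂ := by field_simp
        rw [e1, e2]

private lemma Kcone_coe (n : ℕ) (W : Set (EuclideanSpace ℝ (Fin (n + 2)))) :
    (Kcone n W : Set (EuclideanSpace ℝ (Fin (n + 2)))) = Kset n W := rfl

private lemma Kset_isClosed (n : ℕ) {W : Set (EuclideanSpace ℝ (Fin (n + 2)))}
    (hWc : IsCompact W) {ε : ℝ} (hε : 0 < ε)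
    (hnorm : ∀ y ∈ convexHull ℝ W, ε ≤ ‖y‖) : IsClosed (Kset n W) := by
  refine isClosed_of_closure_subset ?_
  intro x hx
  obtain ⟨u, hu, hux⟩ := mem_closure_iff_seq_limit.mp hx
  have hCH := isCompact_convexHull' hWc
  set M := (‖x‖ + 1) / ε with hM
  set C := (fun p : ℝ × EuclideanSpace ℝ (Fin (n + 2)) => p.1 • p.2) ''
    (Set.Icc (0 : ℝ) M ×ˢ convexHull ℝ W) with hC
  have hCc : IsCompact C := (isCompact_Icc.prod hCH).image continuous_smul
  have hCK : C ⊆ Kset n W := by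
    rintro _ ⟨⟨l, y⟩, ⟨hl, hy⟩, rfl⟩
    exact ⟨l, hl.1, y, hy, rfl⟩
  have hev : ∀ᶠ k in Filter.atTop, u k ∈ C := by
    have hn : Filter.Tendsto (fun k => ‖u k‖) Filter.atTop (nhds ‖x‖) := hux.norm
    have hlt : ∀ᶠ k in Filter.atTop, ‖u k‖ < ‖x‖ + 1 := hn.eventually_lt_const (by linarith)
    filter_upwards [hlt] with k hk
    obtain ⟨l, hl, y, hy, huk⟩ := hu k
    refine ⟨⟨l, y⟩, ⟨⟨hl, ?_⟩, hy⟩, huk.symm⟩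
    have hyn : ε ≤ ‖y‖ := hnorm y hy
    have h1 : l * ε ≤ l * ‖y‖ := mul_le_mul_of_nonneg_left hyn hl
    have h2 : l * ‖y‖ = ‖u k‖ := by rw [huk, norm_smul, Real.norm_eq_abs, abs_of_nonneg hl]
    rw [hM, le_div_iff₀ hε]
    linarith
  exact hCK (hCc.isClosed.closure_subset (mem_closure_of_tendsto hux hev))

private lemma sconv_eq_Kset (n : ℕ) {W : Set (EuclideanSpace ℝ (Fin (n + 2)))}
    {ε : ℝ} (hε : 0 < ε) (hnorm : ∀ y ∈ convexHull ℝ W, ε ≤ ‖y‖) :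
    sconv n W = Kset n W ∩ sph n := by
  apply Set.Subset.antisymm
  · rintro x ⟨k, t, P, hPW, ht, hts, rfl⟩
    set s := ∑ i, t i • P i with hs_def
    have hs : s ∈ convexHull ℝ W := mem_convexHull_of_exists_fintype t P ht hts hPW rfl
    have hs0 : s ≠ 0 := by
      intro h
      have := hnorm s hs
      rw [h, norm_zero] at this
      linarith
    refine ⟨⟨‖s‖⁻¹, inv_nonneg.mpr (norm_nonneg _), s, hs, rfl⟩, ?_⟩
    exact mem_sphere_zero_iff_norm.mpr (norm_smul_inv_norm hs0)
  · rintro x ⟨⟨l, hl, y, hy, rfl⟩, hx⟩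
    have h1 : ‖l • y‖ = 1 := mem_sphere_zero_iff_norm.mp hx
    have hy0 : y ≠ 0 := by
      intro h
      have := hnorm y hy
      rw [h, norm_zero] at this
      linarith
    have hmul : l * ‖y‖ = 1 := by
      calc l * ‖y‖ = ‖l‖ * ‖y‖ := by rw [Real.norm_eq_abs, abs_of_nonneg hl]
        _ = ‖l • y‖ := (norm_smul l y).symm
        _ = 1 := h1
    have hleq : l = ‖y‖⁻¹ := eq_inv_of_mul_eq_one_left hmul
    rw [mem_convexHull_iff_exists_fintype] at hy
    obtain ⟨ι, _inst, w, z, hw0, hw1, hzW, hzy⟩ := hy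
    set e : ι ≃ Fin (Fintype.card ι) := Fintype.equivFin ι with he
    refine ⟨Fintype.card ι, w ∘ e.symm, z ∘ e.symm, fun i => hzW _, fun i => hw0 _, ?_, ?_⟩
    · rw [Function.comp_def, Equiv.sum_comp e.symm w]
      exact hw1
    · have hsum : ∑ i, (w ∘ e.symm) i • (z ∘ e.symm) i = y := by
        calc ∑ i, (w ∘ e.symm) i • (z ∘ e.symm) i
            = ∑ i, (fun j => w j • z j) (e.symm i) := rfl
          _ = ∑ i, w i • z i := Equiv.sum_comp e.symm (fun j => w j • z j)
          _ = y := hzy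
      rw [hsum, hleq]

private lemma spolar_cone_inter (n : ℕ) (S : ConvexCone ℝ (EuclideanSpace ℝ (Fin (n + 2)))) :
    spolar n ((S : Set (EuclideanSpace ℝ (Fin (n + 2)))) ∩ sph n) =
      (ProperCone.innerDual (S : Set (EuclideanSpace ℝ (Fin (n + 2)))) :
        Set (EuclideanSpace ℝ (Fin (n + 2)))) ∩ sph n := by
  ext x
  simp only [spolar, Set.mem_sep_iff, Set.mem_inter_iff, SetLike.mem_coe, ProperCone.mem_innerDual]
  constructor
  · rintro ⟨hx, h⟩
    refine ⟨fun P hP => ?_, hx⟩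
    rcases eq_or_ne P 0 with rfl | hP0
    · simp
    · have hpos : (0 : ℝ) < ‖P‖⁻¹ := inv_pos.mpr (norm_pos_iff.mpr hP0)
      have hP1 : ‖P‖⁻¹ • P ∈ (S : Set (EuclideanSpace ℝ (Fin (n + 2)))) ∩ sph n :=
        ⟨S.smul_mem hpos hP, mem_sphere_zero_iff_norm.mpr (norm_smul_inv_norm hP0)⟩
      have h2 := h _ ⟨hP1.1, hP1.2⟩
      rw [real_inner_smul_left] at h2
      nlinarith
  · rintro ⟨h, hx⟩
    exact ⟨hx, fun P hP => h hP.1⟩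

theorem spolar_spolar_sconv (n : ℕ) (W : Set (EuclideanSpace ℝ (Fin (n + 2))))
    (hne : W.Nonempty) (hcl : IsClosed W) (hWs : W ⊆ sph n) (hW : Hemispherical n W) :
    spolar n (spolar n (sconv n W)) = sconv n W := by
  classical
  obtain ⟨Q, hQs, hQW⟩ := hW
  have hQ1 : ‖Q‖ = 1 := mem_sphere_zero_iff_norm.mp hQs
  have hQlt : ∀ P ∈ W, ⟪Q, P⟫ < 0 := by
    intro P hP
    by_contra h
    push_neg at h
    have : P ∈ W ∩ hemi n Q := ⟨hP, hWs hP, h⟩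
    rw [hQW] at this
    exact this
  -- compactness of W and existence of a uniform gap ε
  have hWc : IsCompact W :=
    (isCompact_sphere (0 : EuclideanSpace ℝ (Fin (n + 2))) 1).of_isClosed_subset hcl hWs
  obtain ⟨P₀, hP₀, hmax⟩ := hWc.exists_isMaxOn hne
    ((continuous_const.inner continuous_id).continuousOn :
      ContinuousOn (fun y => ⟪Q, y⟫) W)
  set ε : ℝ := -⟪Q, P₀⟫ with hε_def
  have hε : 0 < ε := by
    have := hQlt P₀ hP₀
    simp only [hε_def]
    linarith
  have hQle : ∀ P ∈ W, ⟪Q, P⟫ ≤ -ε := by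
    intro P hP
    have := hmax hP
    simp only [hε_def, neg_neg]
    exact this
  have hnorm : ∀ y ∈ convexHull ℝ W, ε ≤ ‖y‖ := hull_norm_ge hQ1 hQle
  -- nonemptiness and closedness of the cone
  have hKne : (Kset n W).Nonempty := by
    obtain ⟨P₁, hP₁⟩ := hne
    exact ⟨P₁, 1, zero_le_one, P₁, subset_convexHull ℝ W hP₁, (one_smul ℝ P₁).symm⟩
  have hKcl : IsClosed (Kset n W) := Kset_isClosed n hWc hε hnorm
  -- rewrite everything in terms of the cone and apply the bipolar theorem
  have hsc : sconv n W = (Kcone n W : Set (EuclideanSpace ℝ (Fin (n + 2)))) ∩ sph n := by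
    rw [Kcone_coe]
    exact sconv_eq_Kset n hε hnorm
  rw [hsc, spolar_cone_inter n (Kcone n W)]
  have h2 := spolar_cone_inter n
    (ProperCone.innerDual (Kcone n W : Set (EuclideanSpace ℝ (Fin (n + 2)))) :
      PointedCone ℝ (EuclideanSpace ℝ (Fin (n + 2)))).toConvexCone
  have hcoe : ((ProperCone.innerDual (Kcone n W : Set (EuclideanSpace ℝ (Fin (n + 2)))) :
      PointedCone ℝ (EuclideanSpace ℝ (Fin (n + 2)))).toConvexCone :
        Set (EuclideanSpace ℝ (Fin (n + 2)))) =
      (ProperCone.innerDual (Kcone n W : Set (EuclideanSpace ℝ (Fin (n + 2)))) :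
        Set (EuclideanSpace ℝ (Fin (n + 2)))) := rfl
  rw [hcoe] at h2
  rw [h2]
  let C : ProperCone ℝ (EuclideanSpace ℝ (Fin (n + 2))) :=
    ⟨(Kcone n W).toPointedCone (ConvexCone.Pointed.of_nonempty_of_isClosed hKne hKcl), hKcl⟩
  have hCK : (C : Set (EuclideanSpace ℝ (Fin (n + 2)))) =
      (Kcone n W : Set (EuclideanSpace ℝ (Fin (n + 2)))) := rfl
  rw [← hCK, ProperCone.innerDual_innerDual]
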